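/- Let (X, 𝒜, μ) be a q-measure space and let f = Σ_{i=1}^{n} αᵢ χ_{Aᵢ} be a simple measurable function with A₁, …, Aₙ ∈ 𝒜 mutually disjoint and 0 < α₁ < α₂ < ⋯ < αₙ. Then ∫ f dμ = Σ_{k=1}^{n} α_k [ Σ_{j=k+1}^{n} μ(A_k ∪ A_j) − (n − k − 1) μ(A_k) − Σ_{j=k+1}^{n} μ(A_j) ] (for k = n the bracket equals μ(Aₙ)); equivalently, setting α₀ = 0, ∫ f dμ = Σ_{i=0}^{n−1} (α_{i+1} − α_i) μ(A_{i+1} ∪ ⋯ ∪ Aₙ). -/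

import Mathlib

open MeasureTheory Set Filter Topology

/-- Grade-2 additivity for a set function on the measurable sets of `X`. -/
def Grade2Additive {X : Type*} [MeasurableSpace X] (μ : Set X → ℝ) : Prop :=
  ∀ A B C : Set X, MeasurableSet A → MeasurableSet B → MeasurableSet C →
    Disjoint A B → Disjoint A C → Disjoint B C →
    μ (A ∪ B ∪ C) = μ (A ∪ B) + μ (A ∪ C) + μ (B ∪ C) - μ A - μ B - μ C

/-- Continuity of a set function along increasing and decreasing sequences. -/
def QContinuous {X : Type*} [MeasurableSpace X] (μ : Set X → ℝ) : Prop :=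
  (∀ A : ℕ → Set X, (∀ i, MeasurableSet (A i)) → Monotone A →
    Tendsto (fun i => μ (A i)) atTop (𝓝 (μ (⋃ i, A i)))) ∧
  (∀ A : ℕ → Set X, (∀ i, MeasurableSet (A i)) → Antitone A →
    Tendsto (fun i => μ (A i)) atTop (𝓝 (μ (⋂ i, A i))))

/-- A `q`-measure: a nonnegative, grade-2 additive, continuous set function. -/
structure IsQMeasure {X : Type*} [MeasurableSpace X] (μ : Set X → ℝ) : Prop where
  nonneg : ∀ A : Set X, MeasurableSet A → 0 ≤ μ A
  grade2 : Grade2Additive μ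
  cont : QContinuous μ

/-- The `q`-integral:
`∫ f dμ = ∫₀^∞ μ(f⁻¹(λ,∞)) dλ − ∫₀^∞ μ(f⁻¹(−∞,−λ)) dλ`,
the integrals on the right being Lebesgue integrals in `λ`. -/
noncomputable def qIntegral {X : Type*} [MeasurableSpace X]
    (μ : Set X → ℝ) (f : X → ℝ) : ℝ :=
  (∫ l in Set.Ioi (0 : ℝ), μ (f ⁻¹' Set.Ioi l))
    - ∫ l in Set.Ioi (0 : ℝ), μ (f ⁻¹' Set.Iio (-l))

/-- `f` is `μ`-integrable: `f` is measurable and both Lebesgue integrals defining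
the `q`-integral are finite. -/
def QIntegrable {X : Type*} [MeasurableSpace X] (μ : Set X → ℝ) (f : X → ℝ) : Prop :=
  Measurable f ∧
  IntegrableOn (fun l => μ (f ⁻¹' Set.Ioi l)) (Set.Ioi (0 : ℝ)) ∧
  IntegrableOn (fun l => μ (f ⁻¹' Set.Iio (-l))) (Set.Ioi (0 : ℝ))

lemma qMeasure_empty' {X : Type*} [MeasurableSpace X] {μ : Set X → ℝ}
    (hμ : IsQMeasure μ) : μ ∅ = 0 := by
  have h := hμ.grade2 Set.univ ∅ ∅ MeasurableSet.univ MeasurableSet.empty MeasurableSet.empty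
    (by simp) (by simp) (by simp)
  simp at h
  linarith

lemma union_expand' {X : Type*} [MeasurableSpace X] {μ : Set X → ℝ}
    (hμ : IsQMeasure μ) (E : Set X) (hE : MeasurableSet E) (A : ℕ → Set X)
    (s : Finset ℕ) :
    (∀ j ∈ s, MeasurableSet (A j)) → (∀ j ∈ s, Disjoint E (A j)) →
    (∀ i ∈ s, ∀ j ∈ s, i ≠ j → Disjoint (A i) (A j)) →
    μ (E ∪ ⋃ j ∈ s, A j) = μ (⋃ j ∈ s, A j) + (∑ j ∈ s, μ (E ∪ A j))
      - ((s.card : ℝ) - 1) * μ E - ∑ j ∈ s, μ (A j) := by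
  classical
  induction s using Finset.induction_on with
  | empty => intro _ _ _; simp [qMeasure_empty' hμ]
  | @insert a t ha ih =>
    intro hA hEA hAA
    have hAa : MeasurableSet (A a) := hA a (Finset.mem_insert_self a t)
    have hAt : ∀ j ∈ t, MeasurableSet (A j) := fun j hj => hA j (Finset.mem_insert_of_mem hj)
    have hU : MeasurableSet (⋃ j ∈ t, A j) := t.measurableSet_biUnion hAt
    have hEa : Disjoint E (A a) := hEA a (Finset.mem_insert_self a t)
    have hEU : Disjoint E (⋃ j ∈ t, A j) := by
      simp only [Set.disjoint_iUnion_right]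
      intro j hj; exact hEA j (Finset.mem_insert_of_mem hj)
    have haU : Disjoint (A a) (⋃ j ∈ t, A j) := by
      simp only [Set.disjoint_iUnion_right]
      intro j hj
      exact hAA a (Finset.mem_insert_self a t) j (Finset.mem_insert_of_mem hj)
        (by rintro rfl; exact ha hj)
    have h2 := hμ.grade2 E (A a) (⋃ j ∈ t, A j) hE hAa hU hEa hEU haU
    have ihh := ih hAt (fun j hj => hEA j (Finset.mem_insert_of_mem hj))
      (fun i hi j hj hij =>
        hAA i (Finset.mem_insert_of_mem hi) j (Finset.mem_insert_of_mem hj) hij)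
    rw [Finset.set_biUnion_insert, Finset.sum_insert ha, Finset.sum_insert ha,
      Finset.card_insert_of_notMem ha, ← Set.union_assoc, h2, ihh]
    push_cast
    ring

lemma abel_aux' (α c : ℕ → ℝ) (n : ℕ) :
    ∑ i ∈ Finset.range n, (α (i+1) - α i) * c (i+1)
      = (∑ i ∈ Finset.range n, α (i+1) * (c (i+1) - c (i+1+1))) + α n * c (n+1) - α 0 * c 1 := by
  induction n with
  | zero => simp
  | succ m ih => rw [Finset.sum_range_succ, Finset.sum_range_succ, ih]; ring

/-- Lemma 4.2: the `q`-integral of a simple function `f = Σᵢ αᵢ χ_{Aᵢ}` with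
`A₁, …, Aₙ` mutually disjoint measurable sets and `0 = α₀ < α₁ < ⋯ < αₙ`:
`∫ f dμ = Σ_k α_k [Σ_{j>k} μ(A_k ∪ A_j) − (n−k−1) μ(A_k) − Σ_{j>k} μ(A_j)]`;
equivalently `∫ f dμ = Σ_{i=0}^{n−1} (α_{i+1} − α_i) μ(A_{i+1} ∪ ⋯ ∪ Aₙ)`. -/
theorem qIntegral_simpleFunc {X : Type*} [MeasurableSpace X] (μ : Set X → ℝ)
    (hμ : IsQMeasure μ) (n : ℕ) (hn : 1 ≤ n)
    (A : ℕ → Set X) (hA : ∀ i ∈ Finset.Icc 1 n, MeasurableSet (A i))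
    (hdisj : ∀ i ∈ Finset.Icc 1 n, ∀ j ∈ Finset.Icc 1 n, i ≠ j →
      Disjoint (A i) (A j))
    (α : ℕ → ℝ) (hα0 : α 0 = 0)
    (hα : ∀ i j : ℕ, i < j → j ≤ n → α i < α j)
    (f : X → ℝ)
    (hf : f = fun x => ∑ i ∈ Finset.Icc 1 n, Set.indicator (A i) (fun _ => α i) x) :
    qIntegral μ f =
      ∑ k ∈ Finset.Icc 1 n, α k *
        ((∑ j ∈ Finset.Icc (k + 1) n, μ (A k ∪ A j))
          - ((n : ℝ) - k - 1) * μ (A k)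
          - ∑ j ∈ Finset.Icc (k + 1) n, μ (A j)) ∧
    qIntegral μ f =
      ∑ i ∈ Finset.range n, (α (i + 1) - α i) * μ (⋃ j ∈ Finset.Icc (i + 1) n, A j) := by
  classical
  have hempty : μ ∅ = 0 := qMeasure_empty' hμ
  have hαmono : ∀ i j : ℕ, i ≤ j → j ≤ n → α i ≤ α j := by
    intro i j hij hjn
    rcases eq_or_lt_of_le hij with rfl | h
    · exact le_rfl
    · exact (hα i j h hjn).le
  have hαnn : ∀ i, i ≤ n → 0 ≤ α i := by
    intro i hi; rw [← hα0]; exact hαmono 0 i (Nat.zero_le _) hi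
  have hfval : ∀ j ∈ Finset.Icc 1 n, ∀ x ∈ A j, f x = α j := by
    intro j hj x hx
    simp only [hf]
    rw [Finset.sum_eq_single j]
    · exact Set.indicator_of_mem hx _
    · intro i hi hij
      exact Set.indicator_of_notMem
        (fun hxi => (hdisj i hi j hj hij).ne_of_mem hxi hx rfl) _
    · intro h; exact absurd hj h
  have hfcases : ∀ x, f x = 0 ∨ ∃ j ∈ Finset.Icc 1 n, x ∈ A j ∧ f x = α j := by
    intro x
    by_cases h : ∃ j ∈ Finset.Icc 1 n, x ∈ A j
    · obtain ⟨j, hj, hx⟩ := h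
      exact Or.inr ⟨j, hj, hx, hfval j hj x hx⟩
    · push_neg at h
      refine Or.inl ?_
      simp only [hf]
      exact Finset.sum_eq_zero fun i hi => Set.indicator_of_notMem (h i hi) _
  -- preimage descriptions
  have hpreim : ∀ i, i < n → ∀ l : ℝ, 0 < l → α i ≤ l → l < α (i+1) →
      f ⁻¹' Set.Ioi l = ⋃ j ∈ Finset.Icc (i+1) n, A j := by
    intro i hin l hl hle hlt
    ext x
    simp only [Set.mem_preimage, Set.mem_Ioi, Set.mem_iUnion, exists_prop]
    constructor
    · intro hx
      rcases hfcases x with h0 | ⟨j, hj, hxj, hval⟩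
      · exfalso; rw [h0] at hx; exact absurd hx (not_lt.2 hl.le)
      · refine ⟨j, ?_, hxj⟩
        rw [Finset.mem_Icc] at hj ⊢
        refine ⟨?_, hj.2⟩
        by_contra hji
        push_neg at hji
        have hji' : j ≤ i := Nat.lt_succ_iff.mp hji
        have : α j ≤ α i := hαmono j i hji' (le_of_lt hin)
        rw [hval] at hx; linarith
    · rintro ⟨j, hj, hxj⟩
      rw [Finset.mem_Icc] at hj
      have h1 : j ∈ Finset.Icc 1 n := Finset.mem_Icc.mpr ⟨le_trans (Nat.one_le_iff_ne_zero.mpr (by omega)) le_rfl, hj.2⟩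
      rw [hfval j h1 x hxj]
      exact lt_of_lt_of_le hlt (hαmono (i+1) j hj.1 hj.2)
  have hpreim0 : ∀ l : ℝ, α n ≤ l → f ⁻¹' Set.Ioi l = ∅ := by
    intro l hl
    ext x
    simp only [Set.mem_preimage, Set.mem_Ioi, Set.mem_empty_iff_false, iff_false, not_lt]
    rcases hfcases x with h0 | ⟨j, hj, _, hval⟩
    · rw [h0]; exact le_trans (hαnn n le_rfl) hl
    · rw [hval]; exact le_trans (hαmono j n (Finset.mem_Icc.mp hj).2 le_rfl) hl
  have hprneg : ∀ l : ℝ, 0 < l → f ⁻¹' Set.Iio (-l) = ∅ := by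
    intro l hl
    ext x
    simp only [Set.mem_preimage, Set.mem_Iio, Set.mem_empty_iff_false, iff_false, not_lt]
    have h0f : 0 ≤ f x := by
      rcases hfcases x with h0 | ⟨j, hj, _, hval⟩
      · rw [h0]
      · rw [hval]; exact hαnn j (Finset.mem_Icc.mp hj).2
    linarith
  -- the key integral computation
  have key : qIntegral μ f
      = ∑ i ∈ Finset.range n, (α (i + 1) - α i) * μ (⋃ j ∈ Finset.Icc (i + 1) n, A j) := by
    unfold qIntegral
    have hneg : (∫ l in Set.Ioi (0:ℝ), μ (f ⁻¹' Set.Iio (-l))) = 0 := by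
      have hE : Set.EqOn (fun l : ℝ => μ (f ⁻¹' Set.Iio (-l))) (fun _ => (0:ℝ)) (Set.Ioi 0) := by
        intro l hl
        simp only
        rw [hprneg l (Set.mem_Ioi.mp hl), hempty]
      rw [setIntegral_congr_fun measurableSet_Ioi hE, integral_zero]
    rw [hneg, sub_zero]
    have hEq : Set.EqOn (fun l => μ (f ⁻¹' Set.Ioi l))
        (fun l => ∑ i ∈ Finset.range n, Set.indicator (Set.Ico (α i) (α (i+1)))
          (fun _ => μ (⋃ j ∈ Finset.Icc (i + 1) n, A j)) l) (Set.Ioi 0) := by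
      intro l hl
      rw [Set.mem_Ioi] at hl
      by_cases hln : l < α n
      · have hex : ∃ i, i < n ∧ α i ≤ l ∧ l < α (i + 1) := by
          have hP0 : α 0 ≤ l := hα0.le.trans hl.le
          have hile : Nat.findGreatest (fun i => α i ≤ l) n ≤ n :=
            Nat.findGreatest_le (P := fun i => α i ≤ l) n
          have hPi : α (Nat.findGreatest (fun i => α i ≤ l) n) ≤ l :=
            Nat.findGreatest_spec (P := fun i => α i ≤ l) (Nat.zero_le n) hP0
          have hilt : Nat.findGreatest (fun i => α i ≤ l) n < n := by
            rcases lt_or_eq_of_le hile with h | h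
            · exact h
            · exfalso; rw [h] at hPi; linarith
          refine ⟨Nat.findGreatest (fun i => α i ≤ l) n, hilt, hPi, ?_⟩
          by_contra h
          push_neg at h
          exact Nat.findGreatest_is_greatest (P := fun i => α i ≤ l)
            (Nat.lt_succ_self _) hilt h
        obtain ⟨i, hilt, hPi, hlt⟩ := hex
        have hile : i ≤ n := hilt.le
        simp only
        rw [hpreim i hilt l hl hPi hlt]
        rw [Finset.sum_eq_single i]
        · rw [Set.indicator_of_mem (show l ∈ Set.Ico (α i) (α (i+1)) from ⟨hPi, hlt⟩)]
        · intro j hj hji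
          refine Set.indicator_of_notMem ?_ _
          rcases lt_or_gt_of_ne hji with h | h
          · intro hmem
            exact absurd hmem.2 (not_lt.2 (le_trans (hαmono (j+1) i h hile) hPi))
          · intro hmem
            have hij : α (i+1) ≤ α j := hαmono (i+1) j h (le_of_lt (Finset.mem_range.mp hj))
            exact absurd hmem.1 (not_le.2 (lt_of_lt_of_le hlt hij))
        · intro h; exact absurd (Finset.mem_range.mpr hilt) h
      · push_neg at hln
        simp only
        rw [hpreim0 l hln, hempty]
        symm
        refine Finset.sum_eq_zero fun j hj => ?_
        refine Set.indicator_of_notMem ?_ _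
        intro hmem
        have : α (j+1) ≤ α n := hαmono (j+1) n (Finset.mem_range.mp hj) le_rfl
        exact absurd hmem.2 (not_lt.2 (le_trans this hln))
    rw [setIntegral_congr_fun measurableSet_Ioi hEq]
    rw [integral_finset_sum]
    · refine Finset.sum_congr rfl fun i hi => ?_
      rw [setIntegral_indicator measurableSet_Ico]
      have hset : Set.Ioi 0 ∩ Set.Ico (α i) (α (i+1)) = Set.Ico (α i) (α (i+1)) \ {0} := by
        ext x
        simp only [Set.mem_inter_iff, Set.mem_Ico, Set.mem_Ioi, Set.mem_diff,
          Set.mem_singleton_iff]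
        constructor
        · rintro ⟨h3, h1, h2⟩; exact ⟨⟨h1, h2⟩, ne_of_gt h3⟩
        · rintro ⟨⟨h1, h2⟩, h3⟩
          have h0 : 0 ≤ α i := hαnn i (le_of_lt (Finset.mem_range.mp hi))
          exact ⟨lt_of_le_of_ne (le_trans h0 h1) (Ne.symm h3), h1, h2⟩
      rw [hset, setIntegral_const, measureReal_def, measure_diff_null (by simp), Real.volume_Ico,
        ENNReal.toReal_ofReal
          (sub_nonneg.2 (hαmono i (i+1) (Nat.le_succ i) (Finset.mem_range.mp hi)))]
      rw [smul_eq_mul]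
    · intro i _
      rw [integrable_indicator_iff measurableSet_Ico]
      refine integrableOn_const (ne_of_lt ?_)
      rw [Measure.restrict_apply measurableSet_Ico]
      exact lt_of_le_of_lt (measure_mono Set.inter_subset_left) measure_Ico_lt_top
  -- boundary facts
  have hBtop : μ (⋃ j ∈ Finset.Icc (n + 1) n, A j) = 0 := by
    rw [Finset.Icc_eq_empty (by omega)]
    simpa using hempty
  -- the bracket identity
  have hbracket : ∀ k, k ∈ Finset.Icc 1 n →
      α k * ((∑ j ∈ Finset.Icc (k + 1) n, μ (A k ∪ A j))
          - ((n : ℝ) - k - 1) * μ (A k)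
          - ∑ j ∈ Finset.Icc (k + 1) n, μ (A j))
      = α k * (μ (⋃ j ∈ Finset.Icc k n, A j) - μ (⋃ j ∈ Finset.Icc (k+1) n, A j)) := by
    intro k hk
    rw [Finset.mem_Icc] at hk
    have hmem : ∀ j ∈ Finset.Icc (k+1) n, j ∈ Finset.Icc 1 n := by
      intro j hj; rw [Finset.mem_Icc] at hj ⊢; omega
    have hkmem : k ∈ Finset.Icc 1 n := Finset.mem_Icc.mpr hk
    have hexp := union_expand' hμ (A k) (hA k hkmem) A (Finset.Icc (k+1) n)
      (fun j hj => hA j (hmem j hj))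
      (fun j hj => hdisj k hkmem j (hmem j hj) (by rw [Finset.mem_Icc] at hj; omega))
      (fun i hi j hj hij => hdisj i (hmem i hi) j (hmem j hj) hij)
    have hins : Finset.Icc k n = insert k (Finset.Icc (k+1) n) := by
      ext x; simp only [Finset.mem_Icc, Finset.mem_insert]; omega
    have hcard : (((Finset.Icc (k+1) n).card : ℝ)) = (n : ℝ) - k := by
      rw [Nat.card_Icc]
      have h1 : n + 1 - (k + 1) = n - k := by omega
      rw [h1]
      exact_mod_cast Nat.cast_sub hk.2
    rw [hins, Finset.set_biUnion_insert, hexp, hcard]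
    ring
  have hIccRange : ∀ F : ℕ → ℝ, ∑ k ∈ Finset.Icc 1 n, F k = ∑ i ∈ Finset.range n, F (i+1) := by
    intro F
    have h1 : Finset.Icc 1 n = Finset.Ico 1 (n+1) := by
      ext x; simp only [Finset.mem_Icc, Finset.mem_Ico]; omega
    rw [h1, Finset.sum_Ico_eq_sum_range]
    have h2 : n + 1 - 1 = n := by omega
    rw [h2]
    exact Finset.sum_congr rfl fun i _ => by rw [Nat.add_comm]
  have habel := abel_aux' α (fun k => μ (⋃ j ∈ Finset.Icc k n, A j)) n
  try dsimp only at habel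
  constructor
  · rw [key, hIccRange]
    have hsum : ∑ i ∈ Finset.range n,
        (α (i+1) * ((∑ j ∈ Finset.Icc ((i+1) + 1) n, μ (A (i+1) ∪ A j))
          - ((n : ℝ) - ((i+1 : ℕ) : ℝ) - 1) * μ (A (i+1))
          - ∑ j ∈ Finset.Icc ((i+1) + 1) n, μ (A j)))
        = ∑ i ∈ Finset.range n,
          α (i+1) * (μ (⋃ j ∈ Finset.Icc (i+1) n, A j) - μ (⋃ j ∈ Finset.Icc ((i+1)+1) n, A j)) := by
      refine Finset.sum_congr rfl fun i hi => ?_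
      exact hbracket (i+1) (Finset.mem_Icc.mpr ⟨by omega, Finset.mem_range.mp hi⟩)
    rw [hsum, habel, hBtop, hα0]
    ring
  · exact key
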